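/- arXiv:1707.03888 — 2 statements merged into one kernel-verified Lean document; each statement's English description precedes it below -/
import Mathlib

section
/- Let p, c ≥ 1 be integers, let G be a graph with at least 2 vertices, let H_0 be a graph with χ(H_0) = χ_f(H_0) = c, and let H be the p-blowup of H_0. If χ(G) ≥ p, then the tree-like product satisfies χ(T(G,H)) ≥ c·p. -/
open SimpleGraph

/-- `F` is a minor of `G`: branch decomposition formulation. -/
def IsMinor {α : Type*} {β : Type*} (F : SimpleGraph α) (G : SimpleGraph β) : Prop :=
  ∃ f : α → Set β,
    (∀ a, (f a).Nonempty) ∧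
    (∀ a, (G.induce (f a)).Connected) ∧
    (∀ a a', a ≠ a' → Disjoint (f a) (f a')) ∧
    ∀ ⦃a a'⦄, F.Adj a a' → ∃ x ∈ f a, ∃ y ∈ f a', G.Adj x y

/-- Planarity, via Wagner's characterization. -/
def IsPlanar {β : Type*} (G : SimpleGraph β) : Prop :=
  ¬ IsMinor (⊤ : SimpleGraph (Fin 5)) G ∧
  ¬ IsMinor (completeBipartiteGraph (Fin 3) (Fin 3)) G

/-- `G` is `t`-apex: deleting at most `t` vertices leaves a planar graph. -/
def IsApex (t : ℕ) {β : Type*} (G : SimpleGraph β) : Prop :=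
  ∃ X : Set β, X.Finite ∧ X.ncard ≤ t ∧ IsPlanar (G.induce Xᶜ)

/-- `G` is `k`-connected. -/
def IsKConnected (k : ℕ) {β : Type*} [Fintype β] (G : SimpleGraph β) : Prop :=
  k < Fintype.card β ∧
  ∀ X : Finset β, X.card < k → (G.induce ((↑X : Set β)ᶜ)).Connected

/-- Vertices of the tree-like product `T(G,H)`: a vertex of the copy `G_x`
is encoded by the path from the root to the non-leaf tree vertex `x`
(a sequence of vertices of `G` of length `< k`) together with a vertex of `G`. -/
abbrev TPVert (V : Type*) (k : ℕ) : Type _ := (Σ i : Fin k, (Fin i → V)) × V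

/-- The tree-like product `T(G,H)` of `G` with a graph `H` on the ordered
vertex set `Fin k`. -/
def treeProd {V : Type*} (G : SimpleGraph V) {k : ℕ} (H : SimpleGraph (Fin k)) :
    SimpleGraph (TPVert V k) :=
  SimpleGraph.fromRel (fun a b =>
    (a.1 = b.1 ∧ G.Adj a.2 b.2) ∨
    (∃ hij : (a.1.1 : ℕ) < (b.1.1 : ℕ),
      (∀ t : Fin a.1.1, a.1.2 t = b.1.2 ⟨t, t.2.trans hij⟩) ∧
      a.2 = b.1.2 ⟨a.1.1, hij⟩ ∧
      H.Adj a.1.1 b.1.1))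

/-- The `p`-blowup of a graph on `Fin m`, with the blowup classes consecutive. -/
def blowupFin {m : ℕ} (H0 : SimpleGraph (Fin m)) (p : ℕ) : SimpleGraph (Fin (m * p)) where
  Adj i j := ∃ (hi : (i : ℕ) / p < m) (hj : (j : ℕ) / p < m),
    H0.Adj ⟨(i : ℕ) / p, hi⟩ ⟨(j : ℕ) / p, hj⟩
  symm := ⟨by rintro i j ⟨hi, hj, h⟩; exact ⟨hj, hi, h.symm⟩⟩
  loopless := ⟨by rintro i ⟨hi, hj, h⟩; exact H0.loopless.irrefl _ h⟩

/-- The strong `p`-blowup of a graph. -/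
def strongBlowup {W : Type*} (H0 : SimpleGraph W) (p : ℕ) : SimpleGraph (W × Fin p) where
  Adj a b := H0.Adj a.1 b.1 ∨ (a.1 = b.1 ∧ a.2 ≠ b.2)
  symm := ⟨by
    rintro a b (h | ⟨h1, h2⟩)
    · exact Or.inl h.symm
    · exact Or.inr ⟨h1.symm, h2.symm⟩⟩
  loopless := ⟨by rintro a (h | ⟨_, h⟩); exact H0.loopless.irrefl _ h; exact h rfl⟩

/-- An `(a : b)`-coloring of `G`. -/
def HasFracColoring {W : Type*} (G : SimpleGraph W) (a b : ℕ) : Prop :=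
  ∃ f : W → Finset (Fin a), (∀ w, (f w).card = b) ∧
    ∀ ⦃x y⦄, G.Adj x y → Disjoint (f x) (f y)

/-- The fractional chromatic number. -/
noncomputable def fracChrom {W : Type*} (G : SimpleGraph W) : ℝ :=
  sInf {q : ℝ | ∃ a b : ℕ, 0 < b ∧ HasFracColoring G a b ∧ q = (a : ℝ) / (b : ℝ)}
/-- The vertex at level `i` of the branch `w`, with current vertex `v`. -/
def tpNode {V : Type} {k : ℕ} (i : ℕ) (hi : i < k) (w : ℕ → V) (v : V) : TPVert V k :=
  ((⟨⟨i, hi⟩, fun t => w t.1⟩ : Σ j : Fin k, Fin j → V), v)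

lemma tpNode_congr {V : Type} {k : ℕ} (i : ℕ) (hi : i < k) (w w' : ℕ → V) (v : V)
    (h : ∀ t < i, w t = w' t) : tpNode i hi w v = tpNode i hi w' v := by
  unfold tpNode
  have e : (fun t : Fin i => w t.1) = fun t : Fin i => w' t.1 := funext fun t => h t.1 t.2
  rw [e]

lemma lvl_lt {m p : ℕ} (u : Fin m) (t : Fin p) : u.1 * p + t.1 < m * p := by
  calc u.1 * p + t.1 < u.1 * p + p := by omega
  _ = (u.1 + 1) * p := by ring
  _ ≤ m * p := Nat.mul_le_mul_right p u.2

lemma grp_div {p : ℕ} (hp : 0 < p) (u t : ℕ) (ht : t < p) : (u * p + t) / p = u := by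
  rw [mul_comm, Nat.mul_add_div hp, Nat.div_eq_of_lt ht, add_zero]

lemma exists_branch {V : Type} [Fintype V] [DecidableEq V] [Nonempty V] (G : SimpleGraph V)
    {p m N : ℕ} (hp : 0 < p) (H0 : SimpleGraph (Fin m))
    (φ : (treeProd G (blowupFin H0 p)).Coloring (Fin N))
    (hGim : ∀ f : V → Fin N, (∀ ⦃a b⦄, G.Adj a b → f a ≠ f b) →
      p ≤ (Finset.univ.image f).card) :
    ∃ w : ℕ → V, ∀ j' j, ∀ (h1 : j' < j) (hj : j < m * p),
      j' / p = j / p →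
      φ (tpNode j' (h1.trans hj) w (w j')) ≠ φ (tpNode j hj w (w j)) := by
  suffices h : ∀ i, ∃ w : ℕ → V, ∀ j' j, ∀ (h1 : j' < j) (_ : j < i) (hj : j < m * p),
      j' / p = j / p →
      φ (tpNode j' (h1.trans hj) w (w j')) ≠ φ (tpNode j hj w (w j)) by
    obtain ⟨w, hw⟩ := h (m * p)
    exact ⟨w, fun j' j h1 hj => hw j' j h1 hj hj⟩
  intro i
  induction i with
  | zero =>
    exact ⟨fun _ => Classical.arbitrary V,
      fun j' j _ h2 _ _ => absurd h2 (Nat.not_lt_zero j)⟩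
  | succ i ih =>
    obtain ⟨w, hw⟩ := ih
    by_cases hi : i < m * p
    · set S : Finset ℕ := (Finset.range i).filter (fun j => j / p = i / p) with hS
      set F : Finset (Fin N) := S.attach.image
        (fun j => φ (tpNode j.1
          ((Finset.mem_range.mp (Finset.mem_filter.mp j.2).1).trans hi) w (w j.1))) with hF
      have hScard : S.card ≤ i % p := by
        have := Finset.card_range (i % p)
        calc S.card ≤ (Finset.range (i % p)).card := by
              apply Finset.card_le_card_of_injOn (fun j => j % p)
              · intro j hj
                simp only [Finset.mem_coe, hS, Finset.mem_filter, Finset.mem_range] at hj ⊢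
                have d1 := Nat.div_add_mod j p
                have d2 := Nat.div_add_mod i p
                rw [hj.2] at d1
                have h3 : p * (i / p) + j % p < p * (i / p) + i % p := by omega
                exact lt_of_add_lt_add_left h3
              · intro a ha b hb hab
                simp only [hS, Finset.coe_filter, Set.mem_setOf_eq, Finset.mem_range] at ha hb
                have d1 := Nat.div_add_mod a p
                have d2 := Nat.div_add_mod b p
                rw [ha.2] at d1
                rw [hb.2] at d2
                simp only at hab
                omega
        _ = i % p := Finset.card_range _
      have hFcard : F.card < p := by
        have h1 : F.card ≤ S.attach.card := Finset.card_image_le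
        rw [Finset.card_attach] at h1
        have h2 : i % p < p := Nat.mod_lt i hp
        omega
      have hcol : ∀ ⦃a b : V⦄, G.Adj a b →
          φ (tpNode i hi w a) ≠ φ (tpNode i hi w b) := by
        intro a b hab
        apply φ.valid
        rw [treeProd, SimpleGraph.fromRel_adj]
        refine ⟨fun hEq => hab.ne (congrArg Prod.snd hEq), Or.inl (Or.inl ⟨rfl, hab⟩)⟩
      have hex : ∃ v : V, φ (tpNode i hi w v) ∉ F := by
        by_contra hcon
        push_neg at hcon
        have hsub : Finset.univ.image (fun v => φ (tpNode i hi w v)) ⊆ F :=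
          Finset.image_subset_iff.mpr (fun v _ => hcon v)
        have h1 := hGim _ hcol
        have h2 := Finset.card_le_card hsub
        omega
      obtain ⟨v, hv⟩ := hex
      refine ⟨Function.update w i v, ?_⟩
      intro j' j h1 h2 hj hgroup
      have hup : ∀ t < i, Function.update w i v t = w t :=
        fun t ht => Function.update_of_ne (Nat.ne_of_lt ht) _ _
      rcases Nat.lt_or_ge j i with hji | hji
      · have e1 : tpNode j' (h1.trans hj) (Function.update w i v) (Function.update w i v j')
            = tpNode j' (h1.trans hj) w (w j') := by
          rw [hup j' (h1.trans hji)]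
          exact tpNode_congr _ _ _ _ _ (fun t ht => hup t (ht.trans (h1.trans hji)))
        have e2 : tpNode j hj (Function.update w i v) (Function.update w i v j)
            = tpNode j hj w (w j) := by
          rw [hup j hji]
          exact tpNode_congr _ _ _ _ _ (fun t ht => hup t (ht.trans hji))
        rw [e1, e2]
        exact hw j' j h1 hji hj hgroup
      · have hjeq : j = i := by omega
        subst hjeq
        have hji' : j' < j := h1
        have e1 : tpNode j' (h1.trans hj) (Function.update w j v) (Function.update w j v j')
            = tpNode j' (h1.trans hj) w (w j') := by
          rw [hup j' hji']
          exact tpNode_congr _ _ _ _ _ (fun t ht => hup t (ht.trans hji'))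
        have e2 : tpNode j hj (Function.update w j v) (Function.update w j v j)
            = tpNode j hj w v := by
          rw [Function.update_self]
          exact tpNode_congr _ _ _ _ _ (fun t ht => hup t ht)
        rw [e1, e2]
        intro hEq
        apply hv
        rw [hF]
        have hj'S : j' ∈ S := by
          rw [hS]
          simp only [Finset.mem_filter, Finset.mem_range]
          exact ⟨hji', hgroup⟩
        rw [Finset.mem_image]
        refine ⟨⟨j', hj'S⟩, Finset.mem_attach _ _, ?_⟩
        exact hEq
    · exact ⟨w, fun j' j h1 h2 hj hg =>
        hw j' j h1 (lt_of_lt_of_le hj (le_of_not_gt hi)) hj hg⟩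

theorem treeProd_blowup_chromatic_ge {V : Type} [Fintype V] [DecidableEq V]
    (G : SimpleGraph V) (hn : 2 ≤ Fintype.card V)
    (p c : ℕ) (hp : 1 ≤ p) (hc : 1 ≤ c)
    {m : ℕ} (H0 : SimpleGraph (Fin m))
    (hchi : H0.chromaticNumber = c) (hfchi : fracChrom H0 = (c : ℝ))
    (hG : (p : ℕ∞) ≤ G.chromaticNumber) :
    ((c * p : ℕ) : ℕ∞) ≤ (treeProd G (blowupFin H0 p)).chromaticNumber := by
  have hpV : Nonempty V := Fintype.card_pos_iff.mp (by omega)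
  have hp0 : 0 < p := hp
  rw [SimpleGraph.chromaticNumber_eq_biInf]
  refine le_iInf₂ fun N hN => ?_
  rw [Nat.cast_le]
  by_contra hlt
  push_neg at hlt
  obtain ⟨φ⟩ := hN
  -- every proper coloring of `G` uses at least `p` colors
  have hGim : ∀ f : V → Fin N, (∀ ⦃a b⦄, G.Adj a b → f a ≠ f b) →
      p ≤ (Finset.univ.image f).card := by
    intro f hf
    have C' : G.Coloring ↥(Finset.univ.image f) :=
      SimpleGraph.Coloring.mk
        (fun v => ⟨f v, Finset.mem_image_of_mem f (Finset.mem_univ v)⟩)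
        (fun {a b} hab h => hf hab (congrArg Subtype.val h))
    have h1 : G.chromaticNumber ≤ ((Finset.univ.image f).card : ℕ∞) := by
      have h2 := C'.colorable.chromaticNumber_le
      rwa [Fintype.card_coe] at h2
    exact_mod_cast hG.trans h1
  obtain ⟨w, hw⟩ := exists_branch G hp0 H0 φ hGim
  -- colors at levels in adjacent groups differ
  have hadj : ∀ j' j, ∀ (h1 : j' < j) (hj : j < m * p) (hd1 : j' / p < m) (hd2 : j / p < m),
      H0.Adj ⟨j' / p, hd1⟩ ⟨j / p, hd2⟩ →
      φ (tpNode j' (h1.trans hj) w (w j')) ≠ φ (tpNode j hj w (w j)) := by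
    intro j' j h1 hj hd1 hd2 hAdj
    apply φ.valid
    rw [treeProd, SimpleGraph.fromRel_adj]
    constructor
    · intro hEq
      have h2 : j' = j := congrArg (fun x => (x.1.1 : ℕ)) hEq
      omega
    · left; right
      exact ⟨h1, fun t => rfl, rfl, ⟨hd1, hd2, hAdj⟩⟩
  -- the fractional coloring of H0
  have hdivlt : ∀ j, j < m * p → j / p < m := by
    intro j hj
    exact Nat.div_lt_of_lt_mul (by rwa [mul_comm])
  have key : HasFracColoring H0 N p := by
    refine ⟨fun u => Finset.univ.image
      (fun t : Fin p => φ (tpNode (u.1 * p + t.1) (lvl_lt u t) w (w (u.1 * p + t.1)))), ?_, ?_⟩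
    · intro u
      rw [Finset.card_image_of_injective _ ?_, Finset.card_univ, Fintype.card_fin]
      intro t t' hEq
      by_contra hne
      have hne' : t.1 ≠ t'.1 := fun h => hne (Fin.ext h)
      have hgrp : ∀ s : Fin p, (u.1 * p + s.1) / p = u.1 * p / p := by
        intro s
        rw [grp_div hp0 u.1 s.1 s.2, Nat.mul_div_cancel _ hp0]
      rcases Nat.lt_or_ge t.1 t'.1 with h | h
      · exact hw _ _ (by omega) (lvl_lt u t') ((hgrp t).trans (hgrp t').symm) hEq
      · have h' : t'.1 < t.1 := by omega
        exact hw _ _ (by omega) (lvl_lt u t) ((hgrp t').trans (hgrp t).symm) hEq.symm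
    · intro u u' hAdj
      rw [Finset.disjoint_left]
      rintro x hx hx'
      rw [Finset.mem_image] at hx hx'
      obtain ⟨t, -, ht⟩ := hx
      obtain ⟨t', -, ht'⟩ := hx'
      have hne : u ≠ u' := hAdj.ne
      have hgrp : ∀ (z : Fin m) (s : Fin p) (hd : (z.1 * p + s.1) / p < m),
          (⟨(z.1 * p + s.1) / p, hd⟩ : Fin m) = z :=
        fun z s hd => Fin.ext (grp_div hp0 z.1 s.1 s.2)
      have hEq : φ (tpNode (u.1 * p + t.1) (lvl_lt u t) w (w (u.1 * p + t.1)))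
          = φ (tpNode (u'.1 * p + t'.1) (lvl_lt u' t') w (w (u'.1 * p + t'.1))) := by
        rw [ht, ht']
      rcases Nat.lt_trichotomy (u.1 * p + t.1) (u'.1 * p + t'.1) with h | h | h
      · refine hadj _ _ h (lvl_lt u' t') (hdivlt _ (lvl_lt u t)) (hdivlt _ (lvl_lt u' t')) ?_ hEq
        rw [hgrp u t, hgrp u' t']
        exact hAdj
      · have : u.1 = u'.1 := by
          have e1 := grp_div hp0 u.1 t.1 t.2
          have e2 := grp_div hp0 u'.1 t'.1 t'.2
          rw [← e1, ← e2, h]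
        exact hne (Fin.ext this)
      · refine hadj _ _ h (lvl_lt u t) (hdivlt _ (lvl_lt u' t')) (hdivlt _ (lvl_lt u t)) ?_ hEq.symm
        rw [hgrp u t, hgrp u' t']
        exact hAdj.symm
  -- conclude via the fractional chromatic number
  have hmem : (N : ℝ) / (p : ℝ) ∈
      {q : ℝ | ∃ a b : ℕ, 0 < b ∧ HasFracColoring H0 a b ∧ q = (a : ℝ) / (b : ℝ)} :=
    ⟨N, p, hp0, key, rfl⟩
  have hbdd : BddBelow
      {q : ℝ | ∃ a b : ℕ, 0 < b ∧ HasFracColoring H0 a b ∧ q = (a : ℝ) / (b : ℝ)} := by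
    refine ⟨0, ?_⟩
    rintro q ⟨a, b, hb, -, rfl⟩
    positivity
  have hle : fracChrom H0 ≤ (N : ℝ) / (p : ℝ) := csInf_le hbdd hmem
  rw [hfchi] at hle
  have hppos : (0 : ℝ) < (p : ℝ) := by exact_mod_cast hp0
  rw [le_div_iff₀ hppos] at hle
  have hfin : ((c * p : ℕ) : ℝ) ≤ (N : ℝ) := by push_cast; exact hle
  have := Nat.cast_le (α := ℝ) |>.mp hfin
  omega
end

section
/- Let G_0 be a planar graph with n ≥ 2 vertices, let k_0 be a positive integer, and let G = T(G_0, K_{k_0×4}) be the tree-like product of G_0 with the complete k_0-partite graph with parts of size 4. Then every (4k_0−3)-connected graph that appears as a minor of G is (4k_0−4)-apex. -/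
open SimpleGraph

section TPAux
open SimpleGraph
variable {γ δ : Type*}

lemma TPX.crossing_aux {G : SimpleGraph γ} {A : Set γ} :
    ∀ {a b : γ} (_ : G.Walk a b), b ∉ A → a ∈ A → ∃ x ∈ A, ∃ y, y ∉ A ∧ G.Adj x y := by
  intro a b w
  induction w with
  | nil => intro hb ha; exact absurd ha hb
  | @cons u v _ hadj p ih =>
    intro hb ha
    by_cases hv : v ∈ A
    · exact ih hb hv
    · exact ⟨u, ha, v, hv, hadj⟩

lemma TPX.exists_adj_crossing {G : SimpleGraph γ} {A : Set γ} {a b : γ}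
    (h : G.Reachable a b) (ha : a ∈ A) (hb : b ∉ A) :
    ∃ x ∈ A, ∃ y, y ∉ A ∧ G.Adj x y := by
  obtain ⟨w⟩ := h
  exact TPX.crossing_aux w hb ha

lemma TPX.reach_closed {G : SimpleGraph γ} {Q : Set γ}
    (hQ : ∀ x ∈ Q, ∀ y, G.Adj x y → y ∈ Q) {a b : γ}
    (h : G.Reachable a b) (ha : a ∈ Q) : b ∈ Q := by
  obtain ⟨w⟩ := h
  induction w with
  | nil => exact ha
  | @cons u v _ hadj p ih => exact ih (hQ u ha v hadj)

lemma TPX.reach_induce_mono (G : SimpleGraph γ) {s t : Set γ} (hst : s ⊆ t)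
    {x y : ↥s} (h : (G.induce s).Reachable x y) :
    (G.induce t).Reachable ⟨x.1, hst x.2⟩ ⟨y.1, hst y.2⟩ := by
  let φ : G.induce s →g G.induce t :=
    { toFun := fun a => ⟨a.1, hst a.2⟩
      map_rel' := by intro a b hab; exact hab }
  exact h.map φ

lemma TPX.connected_induce_proj {G : SimpleGraph γ} {G' : SimpleGraph δ}
    {s : Set γ} {t : Set δ} (φ : γ → δ)
    (hconn : (G.induce s).Connected)
    (hmap : ∀ x ∈ s, φ x ∈ t)
    (hsurj : ∀ y ∈ t, ∃ x ∈ s, φ x = y)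
    (hedge : ∀ x ∈ s, ∀ y ∈ s, G.Adj x y → φ x = φ y ∨ G'.Adj (φ x) (φ y)) :
    (G'.induce t).Connected := by
  have hne : Nonempty ↥t := by
    obtain ⟨⟨x, hx⟩⟩ := hconn.nonempty
    exact ⟨⟨φ x, hmap x hx⟩⟩
  rw [SimpleGraph.connected_iff]
  refine ⟨fun y1 y2 => ?_, hne⟩
  obtain ⟨x1, hx1, he1⟩ := hsurj y1.1 y1.2
  obtain ⟨x2, hx2, he2⟩ := hsurj y2.1 y2.2
  have hr := hconn.preconnected ⟨x1, hx1⟩ ⟨x2, hx2⟩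
  have key : ∀ {a b : ↥s} (_ : (G.induce s).Walk a b),
      (G'.induce t).Reachable ⟨φ a.1, hmap a.1 a.2⟩ ⟨φ b.1, hmap b.1 b.2⟩ := by
    intro a b w
    induction w with
    | nil => exact SimpleGraph.Reachable.refl _
    | @cons u v _ hadj p ih =>
      refine SimpleGraph.Reachable.trans ?_ ih
      rcases hedge u.1 u.2 v.1 v.2 hadj with h | h
      · have heq : (⟨φ u.1, hmap u.1 u.2⟩ : ↥t) = ⟨φ v.1, hmap v.1 v.2⟩ := Subtype.ext h
        rw [heq]
      · exact SimpleGraph.Adj.reachable h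
  obtain ⟨w⟩ := hr
  have := key w
  rw [show (⟨φ x1, hmap x1 hx1⟩ : ↥t) = y1 from Subtype.ext he1,
      show (⟨φ x2, hmap x2 hx2⟩ : ↥t) = y2 from Subtype.ext he2] at this
  exact this

lemma TPX.isMinor_trans {α β η : Type*} {A : SimpleGraph α} {Bg : SimpleGraph β}
    {C : SimpleGraph η} (hAB : IsMinor A Bg) (hBC : IsMinor Bg C) : IsMinor A C := by
  obtain ⟨f, hfne, hfc, hfd, hfe⟩ := hAB
  obtain ⟨g, hgne, hgc, hgd, hge⟩ := hBC
  refine ⟨fun a => ⋃ b ∈ f a, g b, ?_, ?_, ?_, ?_⟩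
  · intro a
    obtain ⟨b, hb⟩ := hfne a
    obtain ⟨x, hx⟩ := hgne b
    exact ⟨x, Set.mem_biUnion hb hx⟩
  · intro a
    set h : Set η := ⋃ b ∈ f a, g b with hh
    have hsub : ∀ {b : β}, b ∈ f a → g b ⊆ h := fun hb => Set.subset_biUnion_of_mem hb
    have hne : Nonempty ↥h := by
      obtain ⟨b, hb⟩ := hfne a
      obtain ⟨x, hx⟩ := hgne b
      exact ⟨⟨x, hsub hb hx⟩⟩
    rw [SimpleGraph.connected_iff]
    refine ⟨fun x y => ?_, hne⟩
    obtain ⟨b1, hb1, hx⟩ := Set.mem_iUnion₂.1 x.2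
    obtain ⟨b2, hb2, hy⟩ := Set.mem_iUnion₂.1 y.2
    have hr := (hfc a).preconnected ⟨b1, hb1⟩ ⟨b2, hb2⟩
    have key : ∀ {p q : ↥(f a)} (_ : (Bg.induce (f a)).Walk p q)
        (x' y' : η) (hx' : x' ∈ g p.1) (hy' : y' ∈ g q.1),
        (C.induce h).Reachable ⟨x', hsub p.2 hx'⟩ ⟨y', hsub q.2 hy'⟩ := by
      intro p q w
      induction w with
      | @nil p =>
        intro x' y' hx' hy'
        have := (hgc p.1).preconnected ⟨x', hx'⟩ ⟨y', hy'⟩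
        exact TPX.reach_induce_mono C (hsub p.2) this
      | @cons u v _ hadj w ih =>
        intro x' y' hx' hy'
        obtain ⟨x1, hx1, y1, hy1, hadj1⟩ := hge hadj
        have r1 : (C.induce h).Reachable ⟨x', hsub u.2 hx'⟩ ⟨x1, hsub u.2 hx1⟩ :=
          TPX.reach_induce_mono C (hsub u.2) ((hgc u.1).preconnected ⟨x', hx'⟩ ⟨x1, hx1⟩)
        have r2 : (C.induce h).Reachable ⟨x1, hsub u.2 hx1⟩ ⟨y1, hsub v.2 hy1⟩ :=
          SimpleGraph.Adj.reachable hadj1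
        exact (r1.trans r2).trans (ih y1 y' hy1 hy')
    obtain ⟨w⟩ := hr
    have := key w x.1 y.1 hx hy
    simpa using this
  · intro a a' haa'
    rw [Set.disjoint_left]
    rintro x hx hx'
    obtain ⟨b1, hb1, hxb1⟩ := Set.mem_iUnion₂.1 hx
    obtain ⟨b2, hb2, hxb2⟩ := Set.mem_iUnion₂.1 hx'
    rcases eq_or_ne b1 b2 with rfl | hne
    · exact (hfd a a' haa').ne_of_mem hb1 hb2 rfl
    · exact (hgd b1 b2 hne).ne_of_mem hxb1 hxb2 rfl
  · intro a a' ha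
    obtain ⟨b1, hb1, b2, hb2, hadj⟩ := hfe ha
    obtain ⟨x1, hx1, y1, hy1, hadj1⟩ := hge hadj
    exact ⟨x1, Set.mem_biUnion hb1 hx1, y1, Set.mem_biUnion hb2 hy1, hadj1⟩

lemma TPX.isPlanar_of_minor {α β : Type*} {A : SimpleGraph α} {Bg : SimpleGraph β}
    (h : IsMinor A Bg) (hB : IsPlanar Bg) : IsPlanar A :=
  ⟨fun h5 => hB.1 (TPX.isMinor_trans h5 h), fun h33 => hB.2 (TPX.isMinor_trans h33 h)⟩

end TPAux

namespace TPX
variable {V : Type*} {K : ℕ}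

/-- The closed subtree: all vertices at level `≥ j` whose path extends `c`. -/
def Ec (j : ℕ) (c : Fin j → V) : Set (TPVert V K) :=
  {b | j ≤ (b.1.1 : ℕ) ∧
    ∀ (t : ℕ) (ht : t < j) (ht' : t < (b.1.1 : ℕ)), b.1.2 ⟨t, ht'⟩ = c ⟨t, ht⟩}

/-- The progenitors of the chain `c` at levels `< B`. -/
def Sc (B : ℕ) (j : ℕ) (c : Fin j → V) : Set (TPVert V K) :=
  {b | ∃ h1 : (b.1.1 : ℕ) < j, (b.1.1 : ℕ) < B ∧
    (∀ (t : ℕ) (ht' : t < (b.1.1 : ℕ)), b.1.2 ⟨t, ht'⟩ = c ⟨t, ht'.trans h1⟩) ∧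
    b.2 = c ⟨b.1.1, h1⟩}

lemma ext' {b b' : TPVert V K} (h1 : (b.1.1 : ℕ) = (b'.1.1 : ℕ))
    (h2 : ∀ (t : ℕ) (ht : t < (b.1.1 : ℕ)) (ht' : t < (b'.1.1 : ℕ)),
      b.1.2 ⟨t, ht⟩ = b'.1.2 ⟨t, ht'⟩)
    (h3 : b.2 = b'.2) : b = b' := by
  obtain ⟨⟨⟨l, hl⟩, p⟩, v⟩ := b
  obtain ⟨⟨⟨l', hl'⟩, p'⟩, v'⟩ := b'
  simp only at h1 h2 h3
  subst h3
  have : l = l' := h1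
  subst this
  have : p = p' := by
    funext t
    exact h2 t t.2 t.2
  subst this
  rfl

lemma Sc_eq_of_level {B j : ℕ} {c : Fin j → V} {b b' : TPVert V K}
    (hb : b ∈ Sc B j c) (hb' : b' ∈ Sc B j c) (h : (b.1.1 : ℕ) = (b'.1.1 : ℕ)) :
    b = b' := by
  obtain ⟨l1, _, hp, hv⟩ := hb
  obtain ⟨l1', _, hp', hv'⟩ := hb'
  refine ext' h (fun t ht ht' => ?_) ?_
  · rw [hp t ht, hp' t ht']
  · rw [hv, hv']
    congr 1
    exact Fin.ext h

lemma disjoint_Ec_Sc {B j : ℕ} {c : Fin j → V} {b : TPVert V K}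
    (hE : b ∈ Ec j c) (hS : b ∈ Sc B j c) : False := by
  obtain ⟨h1, -⟩ := hE
  obtain ⟨h2, -⟩ := hS
  omega

/-- snoc for chains. -/
def snoc {j : ℕ} (c : Fin j → V) (u : V) : Fin (j + 1) → V :=
  fun t => if h : (t : ℕ) < j then c ⟨t, h⟩ else u

/-- the copy vertex `u` in the copy with path `c`. -/
def cv {j : ℕ} (hjK : j < K) (c : Fin j → V) (u : V) : TPVert V K :=
  (⟨⟨j, hjK⟩, fun t => c ⟨t.1, t.2⟩⟩, u)

lemma Sc_succ_cases {B j : ℕ} (hjK : j < K) {c : Fin j → V} {u : V} {b : TPVert V K}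
    (hb : b ∈ Sc B (j+1) (snoc c u)) :
    b ∈ Sc B j c ∨ (j < B ∧ b = cv hjK c u) := by
  obtain ⟨h1, hB, hp, hv⟩ := hb
  rcases lt_or_ge (b.1.1 : ℕ) j with hlt | hge
  · left
    refine ⟨hlt, hB, fun t ht' => ?_, ?_⟩
    · rw [hp t ht']
      simp [snoc, (ht'.trans hlt)]
    · rw [hv]
      simp [snoc, hlt]
  · have hj : (b.1.1 : ℕ) = j := by omega
    right
    refine ⟨by omega, ?_⟩
    refine ext' (by simp [cv, hj]) (fun t ht ht' => ?_) ?_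
    · rw [hp t ht]
      simp only [cv]
      simp [snoc, show (t:ℕ) < j from by simpa [hj] using ht]
    · rw [hv]
      simp only [cv]
      simp [snoc, hj]

/-- the boundary of `Ec j c` is contained in `Sc B j c`. -/
lemma boundary {G0 : SimpleGraph V} {H : SimpleGraph (Fin K)} {B : ℕ}
    (hHB : ∀ i l : Fin K, H.Adj i l → (i : ℕ) < B ∨ (l : ℕ) < B)
    {j : ℕ} {c : Fin j → V} {a b : TPVert V K} (hb : b ∈ Ec j c)
    (hadj : (treeProd G0 H).Adj a b) : a ∈ Ec j c ∨ a ∈ Sc B j c := by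
  obtain ⟨xa, va⟩ := a
  obtain ⟨xb, vb⟩ := b
  obtain ⟨hbl, hbp⟩ := hb
  dsimp only at hbl hbp
  rw [treeProd, SimpleGraph.fromRel_adj] at hadj
  obtain ⟨hne, hr | hr⟩ := hadj
  · rcases hr with ⟨hcopy, -⟩ | ⟨hij, hpre, ha2, hH⟩
    · dsimp only at hcopy
      subst hcopy
      exact Or.inl ⟨hbl, hbp⟩
    · dsimp only at hij hpre ha2 hH
      rcases le_or_gt j (xa.1 : ℕ) with hge | hlt
      · left
        refine ⟨hge, fun t ht ht' => ?_⟩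
        have := hpre ⟨t, ht'⟩
        dsimp only at this
        rw [this]
        exact hbp t ht (ht.trans_le hbl)
      · right
        have haB : (xa.1 : ℕ) < B := by
          rcases hHB _ _ hH with h | h
          · exact h
          · omega
        refine ⟨hlt, haB, fun t ht' => ?_, ?_⟩
        · have := hpre ⟨t, ht'⟩
          dsimp only at this
          rw [this]
          exact hbp t (ht'.trans hlt) (ht'.trans hij)
        · rw [ha2]
          exact hbp _ hlt hij
  · rcases hr with ⟨hcopy, -⟩ | ⟨hij, hpre, hb2, hH⟩
    · dsimp only at hcopy
      subst hcopy
      exact Or.inl ⟨hbl, hbp⟩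
    · dsimp only at hij hpre hb2 hH
      left
      have hlev : j ≤ ((xa, va).1.1 : ℕ) := by show j ≤ (xa.1 : ℕ); omega
      refine ⟨hlev, fun t ht ht' => ?_⟩
      have := hpre ⟨t, by omega⟩
      dsimp only at this
      rw [← this]
      exact hbp t ht (by omega)

end TPX

section TPMain
open SimpleGraph TPX

lemma TPX.main {V W : Type} [Fintype W] {K B : ℕ}
    (G0 : SimpleGraph V) (H : SimpleGraph (Fin K))
    (hHB : ∀ i l : Fin K, H.Adj i l → (i : ℕ) < B ∨ (l : ℕ) < B)
    (hplanar : IsPlanar G0) (F : SimpleGraph W)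
    (hminor : IsMinor F (treeProd G0 H))
    (hconn : IsKConnected (B + 1) F) : IsApex B F := by
  classical
  obtain ⟨f, hfne, hfc, hfdisj, hfe⟩ := hminor
  have hcardW : B + 1 < Fintype.card W := hconn.1
  -- the set of vertices of `F` whose branch set meets the progenitors of `c`
  set P : ∀ (j : ℕ), (Fin j → V) → Finset W :=
    fun j c => Finset.univ.filter (fun w => (f w ∩ Sc B j c).Nonempty) with hP
  have hPcard : ∀ (j : ℕ) (c : Fin j → V), (P j c).card ≤ B := by
    intro j c
    have := Finset.card_le_card_of_injOn
      (f := fun w : W => if h : (f w ∩ Sc B j c).Nonempty then (h.choose.1.1 : ℕ) else 0)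
      (s := P j c) (t := Finset.range B) ?_ ?_
    · simpa using this
    · intro w hw
      have hw' : (f w ∩ Sc B j c).Nonempty := by
        simpa [hP] using hw
      obtain ⟨-, hS⟩ := hw'.choose_spec
      obtain ⟨-, hB, -⟩ := hS
      simp [hw', Finset.mem_range, hB]
    · intro w1 hw1 w2 hw2 heq
      by_contra hne12
      have h1 : (f w1 ∩ Sc B j c).Nonempty := by simpa [hP] using hw1
      have h2 : (f w2 ∩ Sc B j c).Nonempty := by simpa [hP] using hw2
      simp only [dif_pos h1, dif_pos h2] at heq
      have hbb : h1.choose = h2.choose :=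
        Sc_eq_of_level h1.choose_spec.2 h2.choose_spec.2 heq
      have := hfdisj w1 w2 hne12
      exact this.ne_of_mem h1.choose_spec.1 h2.choose_spec.1 hbb
  -- dichotomy for a branch set avoiding the progenitors
  have hdich : ∀ (w : W) (j : ℕ) (c : Fin j → V), f w ∩ Sc B j c = ∅ →
      f w ⊆ Ec j c ∨ f w ∩ Ec j c = ∅ := by
    intro w j c hS
    by_contra hcon
    push_neg at hcon
    obtain ⟨hns, hni⟩ := hcon
    obtain ⟨x, hxf, hxE⟩ := Set.not_subset.1 hns
    obtain ⟨y, hyf, hyE⟩ := hni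
    have hr := (hfc w).preconnected ⟨y, hyf⟩ ⟨x, hxf⟩
    obtain ⟨p, hpA, q, hqA, hpq⟩ := TPX.exists_adj_crossing
      (A := {z : ↥(f w) | z.1 ∈ Ec j c}) hr hyE hxE
    have hadj : (treeProd G0 H).Adj q.1 p.1 := hpq.symm
    rcases TPX.boundary hHB hpA hadj with h | h
    · exact hqA h
    · have hmem : q.1 ∈ f w ∩ Sc B j c := ⟨q.2, h⟩
      rw [hS] at hmem
      exact Set.notMem_empty _ hmem
  -- separation argument
  have hsep : ∀ (j : ℕ) (c : Fin j → V) (w1 w2 : W), f w1 ⊆ Ec j c →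
      f w2 ∩ (Ec j c ∪ Sc B j c) = ∅ → False := by
    intro j c w1 w2 hw1 hw2
    have hcon := hconn.2 (P j c) (Nat.lt_succ_of_le (hPcard j c))
    have hw2split : f w2 ∩ Ec j c = ∅ ∧ f w2 ∩ Sc B j c = ∅ := by
      rw [Set.inter_union_distrib_left, Set.union_empty_iff] at hw2
      exact hw2
    have hw1S : f w1 ∩ Sc B j c = ∅ := by
      ext b
      simp only [Set.mem_inter_iff, Set.mem_empty_iff_false, iff_false, not_and]
      intro hb1 hb2
      exact disjoint_Ec_Sc (hw1 hb1) hb2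
    have hmemP : ∀ w : W, f w ∩ Sc B j c = ∅ → w ∈ ((↑(P j c) : Set W)ᶜ) := by
      intro w hwS
      simp only [Set.mem_compl_iff, Finset.coe_filter, hP, Set.mem_setOf_eq,
        Finset.mem_univ, true_and]
      rw [hwS]
      exact Set.not_nonempty_empty
    have hw1P := hmemP w1 hw1S
    have hw2P := hmemP w2 hw2split.2
    set Q : Set ↥((↑(P j c) : Set W)ᶜ) := {z | f z.1 ⊆ Ec j c} with hQdef
    have hQc : ∀ z ∈ Q, ∀ z', (F.induce ((↑(P j c) : Set W)ᶜ)).Adj z z' → z' ∈ Q := by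
      intro z hz z' hadj
      have hFadj : F.Adj z.1 z'.1 := hadj
      obtain ⟨x, hx, y, hy, hxy⟩ := hfe hFadj
      have hz'S : f z'.1 ∩ Sc B j c = ∅ := by
        have hz'2 := z'.2
        simp only [Set.mem_compl_iff, Finset.coe_filter, hP, Set.mem_setOf_eq,
          Finset.mem_univ, true_and] at hz'2
        exact Set.not_nonempty_iff_eq_empty.1 hz'2
      rcases TPX.boundary hHB (hz hx) hxy.symm with h | h
      · rcases hdich z'.1 j c hz'S with h' | h'
        · exact h'
        · exfalso
          have : y ∈ f z'.1 ∩ Ec j c := ⟨hy, h⟩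
          rw [h'] at this
          exact Set.notMem_empty _ this
      · exfalso
        have : y ∈ f z'.1 ∩ Sc B j c := ⟨hy, h⟩
        rw [hz'S] at this
        exact Set.notMem_empty _ this
    have hreach := hcon.preconnected ⟨w1, hw1P⟩ ⟨w2, hw2P⟩
    have hw2Q : (⟨w2, hw2P⟩ : ↥((↑(P j c) : Set W)ᶜ)) ∈ Q :=
      TPX.reach_closed hQc hreach hw1
    obtain ⟨b, hb⟩ := hfne w2
    have : b ∈ f w2 ∩ Ec j c := ⟨hb, hw2Q hb⟩
    rw [hw2split.1] at this
    exact Set.notMem_empty _ this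
  -- the descent
  have main : ∀ (m j : ℕ), j + m = K → ∀ c : Fin j → V,
      (∀ w, f w ⊆ Ec j c ∨ (f w ∩ Sc B j c).Nonempty) → IsApex B F := by
    intro m
    induction m with
    | zero =>
      intro j hj c hJ
      exfalso
      have hEcempty : ∀ b : TPVert V K, b ∉ Ec j c := by
        rintro b ⟨h1, -⟩
        have := b.1.1.2
        omega
      have hallP : Finset.univ ⊆ P j c := by
        intro w _
        rcases hJ w with h | h
        · exfalso
          obtain ⟨b, hb⟩ := hfne w
          exact hEcempty b (h hb)
        · simp only [hP, Finset.mem_filter, Finset.mem_univ, true_and]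
          exact h
      have := Finset.card_le_card hallP
      rw [Finset.card_univ] at this
      have := hPcard j c
      omega
    | succ m ih =>
      intro j hj c hJ
      have hjK : j < K := by omega
      by_cases hex : ∃ u : V, ∀ w, f w ⊆ Ec (j+1) (snoc c u) ∨
          (f w ∩ Sc B (j+1) (snoc c u)).Nonempty
      · obtain ⟨u, hu⟩ := hex
        exact ih (j+1) (by omega) (snoc c u) hu
      · push_neg at hex
        have hQ : ∀ (u : V) (w : W), ¬ f w ⊆ Ec (j+1) (snoc c u) := by
        -- no branch set lies inside a child subtree
          intro u w hw
          obtain ⟨w2, hw2a, hw2b⟩ := hex u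
          have hw2S : f w2 ∩ Sc B (j+1) (snoc c u) = ∅ := hw2b
          rcases hdich w2 (j+1) (snoc c u) hw2S with h | h
          · exact hw2a h
          · exact hsep (j+1) (snoc c u) w w2 hw
              (by rw [Set.inter_union_distrib_left, h, hw2S, Set.union_empty])
        -- the dip lemma
        have hdip : ∀ (w : W) (u : V), f w ∩ Sc B j c = ∅ →
            (f w ∩ Ec (j+1) (snoc c u)).Nonempty → cv hjK c u ∈ f w := by
          intro w u hwS hwE
          have hS' : (f w ∩ Sc B (j+1) (snoc c u)).Nonempty := by
            by_contra hcon
            have hempty := Set.not_nonempty_iff_eq_empty.1 hcon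
            rcases hdich w (j+1) (snoc c u) hempty with h | h
            · exact hQ u w h
            · rw [h] at hwE
              exact Set.not_nonempty_empty hwE
          obtain ⟨b, hbf, hbS⟩ := hS'
          rcases Sc_succ_cases hjK hbS with h | ⟨-, rfl⟩
          · exfalso
            have : b ∈ f w ∩ Sc B j c := ⟨hbf, h⟩
            rw [hwS] at this
            exact Set.notMem_empty _ this
          · exact hbf
        -- the projection to the level-j copy
        set prj : TPVert V K → V :=
          fun b => if h : j < (b.1.1 : ℕ) then b.1.2 ⟨j, h⟩ else b.2 with hprj
        have hprj_hi : ∀ (b : TPVert V K) (h : j < (b.1.1 : ℕ)), prj b = b.1.2 ⟨j, h⟩ := by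
          intro b h
          simp only [hprj]
          rw [dif_pos h]
        have hprj_lo : ∀ (b : TPVert V K), ¬ j < (b.1.1 : ℕ) → prj b = b.2 := by
          intro b h
          simp only [hprj]
          rw [dif_neg h]
        have hfree : ∀ w, w ∉ P j c → f w ∩ Sc B j c = ∅ := by
          intro w hw
          simp only [hP, Finset.mem_filter, Finset.mem_univ, true_and] at hw
          exact Set.not_nonempty_iff_eq_empty.1 hw
        have hsubE : ∀ w, w ∉ P j c → f w ⊆ Ec j c := by
          intro w hw
          refine (hJ w).resolve_right ?_
          rw [hfree w hw]
          exact Set.not_nonempty_empty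
        -- every branch set avoiding the progenitors contains the copy vertex
        -- above each of its elements
        have hA : ∀ (w : W), w ∉ P j c → ∀ b ∈ f w, cv hjK c (prj b) ∈ f w := by
          intro w hw b hb
          obtain ⟨hbl, hbp⟩ := hsubE w hw hb
          rcases eq_or_lt_of_le hbl with heq | hlt
          · have hbeq : b = cv hjK c (prj b) := by
              refine ext' ?_ (fun t ht ht' => ?_) ?_
              · exact heq.symm
              · exact hbp t (by omega : (t:ℕ) < j) ht
              · exact (hprj_lo b (by omega)).symm
            rw [← hbeq]
            exact hb
          · refine hdip w (prj b) (hfree w hw) ⟨b, hb, ?_, ?_⟩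
            · show j + 1 ≤ (b.1.1 : ℕ)
              omega
            · intro t ht ht'
              rcases Nat.lt_or_ge t j with htj | htj
              · rw [hbp t htj ht']
                simp [snoc, htj]
              · have htj' : t = j := by omega
                subst htj'
                rw [hprj_hi b hlt]
                simp [snoc]
        -- adjacent vertices in the closed subtree project to equal or adjacent
        have hB2 : ∀ x y : TPVert V K, x ∈ Ec j c → y ∈ Ec j c →
            (treeProd G0 H).Adj x y → prj x = prj y ∨ G0.Adj (prj x) (prj y) := by
          have key : ∀ x y : TPVert V K, x ∈ Ec j c → y ∈ Ec j c →
              ((x.1 = y.1 ∧ G0.Adj x.2 y.2) ∨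
              (∃ hij : (x.1.1 : ℕ) < (y.1.1 : ℕ),
                (∀ t : Fin x.1.1, x.1.2 t = y.1.2 ⟨t, t.2.trans hij⟩) ∧
                x.2 = y.1.2 ⟨x.1.1, hij⟩ ∧ H.Adj x.1.1 y.1.1)) →
              prj x = prj y ∨ G0.Adj (prj x) (prj y) := by
            intro x y hx hy hr
            obtain ⟨hxl, hxp⟩ := hx
            obtain ⟨hyl, hyp⟩ := hy
            rcases hr with ⟨hcopy, hG⟩ | ⟨hij, hpre, hx2, -⟩
            · obtain ⟨sx, vx⟩ := x
              obtain ⟨sy, vy⟩ := y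
              dsimp only at hcopy hG hxl hyl
              subst hcopy
              rcases Nat.lt_or_ge j (sx.1 : ℕ) with hlt | hge
              · left
                rw [hprj_hi (sx, vx) hlt, hprj_hi (sx, vy) hlt]
              · right
                rw [hprj_lo (sx, vx) (by show ¬ j < (sx.1 : ℕ); omega),
                  hprj_lo (sx, vy) (by show ¬ j < (sx.1 : ℕ); omega)]
                exact hG
            · have hyl' : j < (y.1.1 : ℕ) := by omega
              left
              rw [hprj_hi y hyl']
              rcases eq_or_lt_of_le hxl with heq | hlt
              · rw [hprj_lo x (by omega), hx2]
                have hfin : (⟨(x.1.1 : ℕ), hij⟩ : Fin (y.1.1 : ℕ)) = ⟨j, hyl'⟩ :=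
                  Fin.ext heq.symm
                rw [hfin]
              · rw [hprj_hi x hlt]
                have := hpre ⟨j, hlt⟩
                dsimp only at this
                rw [this]
          intro x y hx hy hadj
          rw [treeProd, SimpleGraph.fromRel_adj] at hadj
          obtain ⟨-, hr | hr⟩ := hadj
          · exact key x y hx hy hr
          · rcases key y x hy hx hr with h | h
            · exact Or.inl h.symm
            · exact Or.inr h.symm
        -- distinct branch sets have disjoint projections
        have hC : ∀ w w', w ∉ P j c → w' ∉ P j c → w ≠ w' →
            ∀ x ∈ f w, ∀ y ∈ f w', prj x = prj y → False := by
          intro w w' hw hw' hne x hx y hy heq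
          have h1 := hA w hw x hx
          have h2 := hA w' hw' y hy
          rw [heq] at h1
          exact (hfdisj w w' hne).ne_of_mem h1 h2 rfl
        have hnotP : ∀ z : ↥((↑(P j c) : Set W)ᶜ), z.1 ∉ P j c := by
          intro z
          exact fun h => z.2 (Finset.mem_coe.2 h)
        refine ⟨(↑(P j c) : Set W), Set.toFinite _, ?_, ?_⟩
        · rw [Set.ncard_coe_finset]
          exact hPcard j c
        refine TPX.isPlanar_of_minor (Bg := G0) ?_ hplanar
        refine ⟨fun z => prj '' f z.1, ?_, ?_, ?_, ?_⟩
        · intro z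
          exact (hfne z.1).image _
        · intro z
          refine TPX.connected_induce_proj prj (hfc z.1)
            (fun x hx => Set.mem_image_of_mem _ hx)
            (fun y hy => hy) ?_
          intro x hx y hy hxy
          exact hB2 x y (hsubE z.1 (hnotP z) hx) (hsubE z.1 (hnotP z) hy) hxy
        · intro z z' hzz'
          rw [Set.disjoint_left]
          rintro v ⟨x, hx, rfl⟩ ⟨y, hy, hyx⟩
          exact hC z.1 z'.1 (hnotP z) (hnotP z')
            (fun h => hzz' (Subtype.ext h)) x hx y hy hyx.symm
        · intro z z' hadj
          have hFadj : F.Adj z.1 z'.1 := hadj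
          obtain ⟨x, hx, y, hy, hxy⟩ := hfe hFadj
          have hzne : z.1 ≠ z'.1 := fun h => hFadj.ne h
          rcases hB2 x y (hsubE z.1 (hnotP z) hx) (hsubE z'.1 (hnotP z') hy) hxy with h | h
          · exact absurd h (fun h => hC z.1 z'.1 (hnotP z) (hnotP z') hzne x hx y hy h)
          · exact ⟨prj x, Set.mem_image_of_mem _ hx, prj y, Set.mem_image_of_mem _ hy, h⟩
  exact main K 0 (by omega) (fun t => absurd t.2 (by omega)) (fun w => Or.inl (by
    intro b hb
    exact ⟨Nat.zero_le _, fun t ht ht' => absurd ht (by omega)⟩))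
end TPMain

theorem treeProd_planar_minor_apex {V : Type} [Fintype V] [DecidableEq V]
    (G0 : SimpleGraph V) (hplanar : IsPlanar G0) (hn : 2 ≤ Fintype.card V)
    (k0 : ℕ) (hk0 : 1 ≤ k0)
    {W : Type} [Fintype W] (F : SimpleGraph W)
    (hminor : IsMinor F (treeProd G0 (blowupFin (⊤ : SimpleGraph (Fin k0)) 4)))
    (hconn : IsKConnected (4 * k0 - 3) F) :
    IsApex (4 * k0 - 4) F := by
  have hHB : ∀ i l : Fin (k0 * 4), (blowupFin (⊤ : SimpleGraph (Fin k0)) 4).Adj i l →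
      (i : ℕ) < 4 * k0 - 4 ∨ (l : ℕ) < 4 * k0 - 4 := by
    rintro i l ⟨hi, hl, hadj⟩
    have hne : (⟨(i : ℕ) / 4, hi⟩ : Fin k0) ≠ ⟨(l : ℕ) / 4, hl⟩ := by
      simpa using hadj
    have hne' : (i : ℕ) / 4 ≠ (l : ℕ) / 4 := fun h => hne (Fin.ext h)
    have h1 := i.2
    have h2 := l.2
    omega
  have h34 : 4 * k0 - 3 = (4 * k0 - 4) + 1 := by omega
  rw [h34] at hconn
  exact TPX.main G0 (blowupFin (⊤ : SimpleGraph (Fin k0)) 4) hHB hplanar F hminor hconn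
end
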